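/- Let P be an L-convex polyomino whose sorted (decreasing) row lengths are h_1 ≥ ... ≥ h_n and sorted (decreasing) column lengths are v_1 ≥ ... ≥ v_m. Then min{ n, min_{1 ≤ j ≤ n}(h_j + j - 1) } = min{ m, min_{1 ≤ j ≤ m}(v_j + j - 1) }, both being equal to the maximal number of non-attacking rooks placeable on P. -/

import Mathlib

/-- Two cells of `ℤ × ℤ` are adjacent if they share an edge. -/
def CellAdj (a b : ℤ × ℤ) : Prop :=
  (a.1 = b.1 ∧ (a.2 = b.2 + 1 ∨ b.2 = a.2 + 1)) ∨
  (a.2 = b.2 ∧ (a.1 = b.1 + 1 ∨ b.1 = a.1 + 1))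

/-- `P` is an L-convex polyomino: it is row convex, column convex, and any two of
its cells are joined by a path of distinct cells of `P` with at most one change of
direction. Cells are recorded as `(row, column)`. -/
def IsLConvex (P : Finset (ℤ × ℤ)) : Prop :=
  (∀ i j j' j'' : ℤ, (i, j) ∈ P → (i, j'') ∈ P → j ≤ j' → j' ≤ j'' → (i, j') ∈ P) ∧
  (∀ i i' i'' j : ℤ, (i, j) ∈ P → (i'', j) ∈ P → i ≤ i' → i' ≤ i'' → (i', j) ∈ P) ∧
  (∀ a ∈ P, ∀ b ∈ P, ∃ (k : ℕ) (c : ℕ → ℤ × ℤ),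
    c 0 = a ∧ c k = b ∧ (∀ i ≤ k, c i ∈ P) ∧
    (∀ i < k, CellAdj (c i) (c (i + 1))) ∧
    (∀ i j, i ≤ k → j ≤ k → c i = c j → i = j) ∧
    ((Finset.Ioo 0 k).filter (fun i =>
      (c (i - 1)).1 ≠ (c (i + 1)).1 ∧ (c (i - 1)).2 ≠ (c (i + 1)).2)).card ≤ 1)

/-- Number of cells of `P` in row `i`. -/
def rowCount (P : Finset (ℤ × ℤ)) (i : ℤ) : ℕ := (P.filter (fun c => c.1 = i)).card

/-- Number of cells of `P` in column `j`. -/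
def colCount (P : Finset (ℤ × ℤ)) (j : ℤ) : ℕ := (P.filter (fun c => c.2 = j)).card

/-- The multiset of row lengths of `P` (one entry per occupied row). -/
def rowMultiset (P : Finset (ℤ × ℤ)) : Multiset ℕ :=
  (P.image Prod.fst).val.map (rowCount P)

/-- The multiset of column lengths of `P` (one entry per occupied column). -/
def colMultiset (P : Finset (ℤ × ℤ)) : Multiset ℕ :=
  (P.image Prod.snd).val.map (colCount P)

/-- The Ferrer diagram (as a set of cells in `ℤ × ℤ`) with `n` left-justified
rows, row `i` (0-based) having `h i` cells. -/
def ferrerCellsZ (n : ℕ) (h : ℕ → ℕ) : Finset (ℤ × ℤ) :=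
  (Finset.range n).biUnion
    (fun i => (Finset.range (h i)).image (fun (j : ℕ) => ((i : ℤ), (j : ℤ))))

/-- Placements of `k` non-attacking rooks on the cell set `P`. -/
def rookPlacements {α β : Type*} [DecidableEq α] [DecidableEq β]
    (P : Finset (α × β)) (r : ℕ) : Finset (Finset (α × β)) :=
  P.powerset.filter (fun R => R.card = r ∧
    ∀ a ∈ R, ∀ b ∈ R, a ≠ b → a.1 ≠ b.1 ∧ a.2 ≠ b.2)

/-- Let `P` be an L-convex polyomino with sorted (weakly decreasing) row lengths
`h 0 ≥ … ≥ h (n-1)` and sorted column lengths `v 0 ≥ … ≥ v (m-1)`. Then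
`min { n, min_{j<n} (h j + j) } = min { m, min_{j<m} (v j + j) }` (0-based version
of `h_j + j - 1`), both being the maximal number of non-attacking rooks on `P`. -/
lemma straight (c : ℕ → ℤ × ℤ) (s t : ℕ) (hst : s ≤ t)
    (hadj : ∀ i, s ≤ i → i < t → CellAdj (c i) (c (i+1)))
    (hnc : ∀ i, s < i → i < t →
      ¬((c (i-1)).1 ≠ (c (i+1)).1 ∧ (c (i-1)).2 ≠ (c (i+1)).2)) :
    (∀ i, s ≤ i → i ≤ t → (c i).1 = (c s).1) ∨
    (∀ i, s ≤ i → i ≤ t → (c i).2 = (c s).2) := by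
  rcases eq_or_lt_of_le hst with rfl | hlt
  · left; intro i h1 h2; have : i = s := le_antisymm h2 h1; rw [this]
  · have hA : ∀ i, s ≤ i → i ≤ t →
        (((c i).1 = (c s).1 ∧ (i = s ∨ (c i).1 = (c (i-1)).1)) ∨
         ((c i).2 = (c s).2 ∧ (i = s ∨ (c i).2 = (c (i-1)).2))) → True := fun _ _ _ _ => trivial
    -- main: case on first step
    rcases hadj s le_rfl hlt with ⟨hr, hc⟩ | ⟨hc, hr⟩
    · -- row constant
      left
      have key : ∀ i, s ≤ i → i ≤ t → ((c i).1 = (c s).1 ∧ (s < i → (c i).1 = (c (i-1)).1)) := by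
        intro i hi
        induction i, hi using Nat.le_induction with
        | base => exact fun _ => ⟨rfl, fun h => absurd h (lt_irrefl s)⟩
        | succ i hi ih =>
          intro hit
          have hit' : i ≤ t := by omega
          obtain ⟨h1, h2⟩ := ih hit'
          have hadji := hadj i hi (by omega)
          rcases hadji with ⟨hr2, hc2⟩ | ⟨hc2, hr2⟩
          · refine ⟨by rw [← hr2, h1], fun _ => ?_⟩
            simp only [Nat.add_sub_cancel]; exact hr2.symm
          · -- column step at i: derive contradiction
            exfalso
            rcases Nat.eq_or_lt_of_le hi with heq | hsi
            · -- i = s, but first step was a row step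
              rw [← heq] at hr2; rcases hr2 with h | h <;> omega
            · have hprev := h2 hsi
              have hadjp := hadj (i-1) (by omega) (by omega)
              have hi1 : i - 1 + 1 = i := by omega
              rw [hi1] at hadjp
              have hcols : (c (i-1)).2 ≠ (c i).2 := by
                rcases hadjp with ⟨_, hcc⟩ | ⟨hcc, hrr⟩
                · rcases hcc with h | h <;> omega
                · exfalso; rcases hrr with h | h <;> omega
              refine hnc i hsi (by omega) ⟨?_, ?_⟩ <;> rcases hr2 with h | h <;> omega
      intro i h1 h2; exact (key i h1 h2).1
    · right
      have key : ∀ i, s ≤ i → i ≤ t → ((c i).2 = (c s).2 ∧ (s < i → (c i).2 = (c (i-1)).2)) := by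
        intro i hi
        induction i, hi using Nat.le_induction with
        | base => exact fun _ => ⟨rfl, fun h => absurd h (lt_irrefl s)⟩
        | succ i hi ih =>
          intro hit
          have hit' : i ≤ t := by omega
          obtain ⟨h1, h2⟩ := ih hit'
          have hadji := hadj i hi (by omega)
          rcases hadji with ⟨hr2, hc2⟩ | ⟨hc2, hr2⟩
          · exfalso
            rcases Nat.eq_or_lt_of_le hi with heq | hsi
            · rw [← heq] at hc2; rcases hc2 with h | h <;> omega
            · have hprev := h2 hsi
              have hadjp := hadj (i-1) (by omega) (by omega)
              have hi1 : i - 1 + 1 = i := by omega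
              rw [hi1] at hadjp
              have hrows : (c (i-1)).1 ≠ (c i).1 := by
                rcases hadjp with ⟨hrr, hcc⟩ | ⟨hcc, hrr⟩
                · exfalso; rcases hcc with h | h <;> omega
                · rcases hrr with h | h <;> omega
              refine hnc i hsi (by omega) ⟨?_, ?_⟩ <;> rcases hc2 with h | h <;> omega
          · refine ⟨by rw [← hc2, h1], fun _ => ?_⟩
            simp only [Nat.add_sub_cancel]; exact hc2.symm
      intro i h1 h2; exact (key i h1 h2).1

lemma crossing {P : Finset (ℤ × ℤ)} (hP : IsLConvex P) :
    ∀ a ∈ P, ∀ b ∈ P, ((a.1, b.2) ∈ P ∨ (b.1, a.2) ∈ P) := by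
  intro a ha b hb
  obtain ⟨k, c, hc0, hck, hmem, hadj, hinj, hcard⟩ := hP.2.2 a ha b hb
  set F := (Finset.Ioo 0 k).filter (fun i =>
      (c (i - 1)).1 ≠ (c (i + 1)).1 ∧ (c (i - 1)).2 ≠ (c (i + 1)).2) with hF
  rcases Finset.eq_empty_or_nonempty F with hFe | ⟨t, htF⟩
  · have hnc : ∀ i, 0 < i → i < k →
        ¬((c (i-1)).1 ≠ (c (i+1)).1 ∧ (c (i-1)).2 ≠ (c (i+1)).2) := by
      intro i h1 h2 hcor
      have : i ∈ F := by
        rw [hF]; exact Finset.mem_filter.mpr ⟨Finset.mem_Ioo.mpr ⟨h1, h2⟩, hcor⟩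
      rw [hFe] at this; exact absurd this (Finset.notMem_empty i)
    rcases straight c 0 k (Nat.zero_le _) (fun i _ h => hadj i h) hnc with hrow | hcol
    · right
      have : b.1 = a.1 := by rw [← hc0, ← hck]; exact hrow k (Nat.zero_le _) le_rfl
      rw [this]
      have : (a.1, a.2) = a := rfl
      rw [this]; exact ha
    · left
      have : b.2 = a.2 := by rw [← hc0, ← hck]; exact hcol k (Nat.zero_le _) le_rfl
      rw [this]
      have : (a.1, a.2) = a := rfl
      rw [this]; exact ha
  · have huniq : ∀ i ∈ F, i = t := by
      intro i hi
      exact Finset.card_le_one.mp hcard i hi t htF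
    obtain ⟨htIoo, hcor⟩ := Finset.mem_filter.mp htF
    obtain ⟨ht0, htk⟩ := Finset.mem_Ioo.mp htIoo
    have hnc1 : ∀ i, 0 < i → i < t →
        ¬((c (i-1)).1 ≠ (c (i+1)).1 ∧ (c (i-1)).2 ≠ (c (i+1)).2) := by
      intro i h1 h2 hc'
      have : i ∈ F := Finset.mem_filter.mpr ⟨Finset.mem_Ioo.mpr ⟨h1, by omega⟩, hc'⟩
      have := huniq i this; omega
    have hnc2 : ∀ i, t < i → i < k →
        ¬((c (i-1)).1 ≠ (c (i+1)).1 ∧ (c (i-1)).2 ≠ (c (i+1)).2) := by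
      intro i h1 h2 hc'
      have : i ∈ F := Finset.mem_filter.mpr ⟨Finset.mem_Ioo.mpr ⟨by omega, h2⟩, hc'⟩
      have := huniq i this; omega
    have seg1 := straight c 0 t (Nat.zero_le _) (fun i _ h => hadj i (by omega)) hnc1
    have seg2 := straight c t k (le_of_lt htk) (fun i _ h => hadj i h) hnc2
    have hctP : c t ∈ P := hmem t (le_of_lt htk)
    rcases seg1 with s1 | s1 <;> rcases seg2 with s2 | s2
    · exfalso
      have e1 : (c (t-1)).1 = (c 0).1 := s1 (t-1) (Nat.zero_le _) (by omega)
      have e2 : (c t).1 = (c 0).1 := s1 t (Nat.zero_le _) le_rfl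
      have e3 : (c (t+1)).1 = (c t).1 := s2 (t+1) (by omega) (by omega)
      exact hcor.1 (by omega)
    · -- seg1 rows, seg2 cols: c t = (a.1, b.2)
      left
      have e1 : (c t).1 = a.1 := by rw [← hc0]; exact s1 t (Nat.zero_le _) le_rfl
      have e2 : (c t).2 = b.2 := by
        rw [← hck]; exact (s2 k (le_of_lt htk) le_rfl).symm
      have : (a.1, b.2) = c t := by
        ext <;> simp [e1, e2]
      rw [this]; exact hctP
    · -- seg1 cols, seg2 rows
      right
      have e1 : (c t).2 = a.2 := by rw [← hc0]; exact s1 t (Nat.zero_le _) le_rfl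
      have e2 : (c t).1 = b.1 := by
        rw [← hck]; exact (s2 k (le_of_lt htk) le_rfl).symm
      have : (b.1, a.2) = c t := by ext <;> simp [e1, e2]
      rw [this]; exact hctP
    · exfalso
      have e1 : (c (t-1)).2 = (c 0).2 := s1 (t-1) (Nat.zero_le _) (by omega)
      have e2 : (c t).2 = (c 0).2 := s1 t (Nat.zero_le _) le_rfl
      have e3 : (c (t+1)).2 = (c t).2 := s2 (t+1) (by omega) (by omega)
      exact hcor.2 (by omega)

def rowSet (P : Finset (ℤ × ℤ)) (i : ℤ) : Finset ℤ :=
  (P.filter (fun c => c.1 = i)).image Prod.snd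

lemma mem_rowSet {P : Finset (ℤ × ℤ)} {i c : ℤ} : c ∈ rowSet P i ↔ (i, c) ∈ P := by
  constructor
  · rintro hc
    obtain ⟨x, hx, rfl⟩ := Finset.mem_image.mp hc
    obtain ⟨hxP, hx1⟩ := Finset.mem_filter.mp hx
    have : (i, x.2) = x := by rw [← hx1]
    rw [this]; exact hxP
  · intro hc
    exact Finset.mem_image.mpr ⟨(i, c), Finset.mem_filter.mpr ⟨hc, rfl⟩, rfl⟩

lemma card_rowSet (P : Finset (ℤ × ℤ)) (i : ℤ) : (rowSet P i).card = rowCount P i := by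
  apply Finset.card_image_of_injOn
  intro x hx y hy hxy
  simp only [Finset.coe_filter, Set.mem_setOf_eq] at hx hy
  exact Prod.ext (hx.2.trans hy.2.symm) hxy

lemma rowSet_nested {P : Finset (ℤ × ℤ)}
    (hcross : ∀ a ∈ P, ∀ b ∈ P, ((a.1, b.2) ∈ P ∨ (b.1, a.2) ∈ P)) (i i' : ℤ) :
    rowSet P i ⊆ rowSet P i' ∨ rowSet P i' ⊆ rowSet P i := by
  by_cases hss : rowSet P i ⊆ rowSet P i'
  · exact Or.inl hss
  · right
    obtain ⟨ca, hca, hca'⟩ := Finset.not_subset.mp hss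
    intro cb hcb
    have h1 := mem_rowSet.mp hca
    have h2 := mem_rowSet.mp hcb
    rcases hcross (i, ca) h1 (i', cb) h2 with hx | hx
    · exact mem_rowSet.mpr hx
    · exact absurd (mem_rowSet.mpr hx) hca'

def keyRel (f : ℤ → ℕ) (a b : ℤ) : Prop := f b < f a ∨ (f a = f b ∧ a ≤ b)

instance (f : ℤ → ℕ) : DecidableRel (keyRel f) := fun _ _ => by unfold keyRel; infer_instance
instance (f : ℤ → ℕ) : IsTrans ℤ (keyRel f) := ⟨by intro a b c; unfold keyRel; omega⟩
instance (f : ℤ → ℕ) : IsAntisymm ℤ (keyRel f) := ⟨by intro a b; unfold keyRel; omega⟩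
instance (f : ℤ → ℕ) : IsTotal ℤ (keyRel f) := ⟨by intro a b; unfold keyRel; omega⟩

lemma mem_rook {α β : Type*} [DecidableEq α] [DecidableEq β]
    {P : Finset (α × β)} {r : ℕ} {R : Finset (α × β)} :
    R ∈ rookPlacements P r ↔ R ⊆ P ∧ R.card = r ∧
      ∀ a ∈ R, ∀ b ∈ R, a ≠ b → a.1 ≠ b.1 ∧ a.2 ≠ b.2 := by
  simp [rookPlacements, Finset.mem_filter, Finset.mem_powerset, and_assoc]

lemma master (P : Finset (ℤ × ℤ))
    (hcross : ∀ a ∈ P, ∀ b ∈ P, ((a.1, b.2) ∈ P ∨ (b.1, a.2) ∈ P))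
    (n : ℕ) (hn : 0 < n) (h : ℕ → ℕ)
    (hdec : ∀ i j : ℕ, i ≤ j → j < n → h j ≤ h i)
    (hrows : rowMultiset P = (Finset.range n).val.map h) :
    IsGreatest {k | (rookPlacements P k).Nonempty}
      (min n ((Finset.range n).inf' (Finset.nonempty_range_iff.mpr hn.ne')
        (fun j => h j + j))) := by
  classical
  set O := P.image Prod.fst with hO
  have hcardO : O.card = n := by
    have := congrArg Multiset.card hrows
    simp only [rowMultiset, Multiset.card_map, Finset.card_val, Finset.card_range] at this; exact this
  -- the sorted list of occupied rows
  set l : List ℤ := Finset.sort O (keyRel (rowCount P)) with hl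
  have hlen : l.length = n := by rw [hl, Finset.length_sort, hcardO]
  have hnodup : l.Nodup := Finset.sort_nodup _ _
  have hmeml : ∀ i, i ∈ l ↔ i ∈ O := fun i => Finset.mem_sort _
  have hsorted : l.Pairwise (keyRel (rowCount P)) := Finset.pairwise_sort _ _
  have hml : (↑l : Multiset ℤ) = O.val := by
    rw [hl]
    calc (↑(Finset.sort O (keyRel (rowCount P))) : Multiset ℤ)
        = ↑O.toList := Multiset.coe_eq_coe.mpr (Finset.sort_perm_toList _ _)
      _ = O.val := Finset.coe_toList O
  -- the two mapped lists are equal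
  have hleq : l.map (rowCount P) = (List.range n).map h := by
    have hperm : (l.map (rowCount P)).Perm ((List.range n).map h) := by
      apply Multiset.coe_eq_coe.mp
      have h1 : (↑(l.map (rowCount P)) : Multiset ℕ) = rowMultiset P := by
        rw [rowMultiset, ← hO, ← hml]; rfl
      have h2 : ((Finset.range n).val.map h : Multiset ℕ) = ↑((List.range n).map h) := by
        rfl
      rw [h1, hrows]; exact h2
    haveI : IsAntisymm ℕ (fun a b => b ≤ a) := ⟨fun a b h1 h2 => le_antisymm h2 h1⟩
    refine List.Perm.eq_of_pairwise' (r := fun a b : ℕ => b ≤ a) ?_ ?_ hperm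
    · exact List.Pairwise.map _ (fun a b hab => by unfold keyRel at hab; omega) hsorted
    · rw [List.pairwise_map]
      refine List.Pairwise.imp_of_mem ?_ (List.pairwise_lt_range (n := n))
      intro a b ha hb hab
      exact hdec a b (le_of_lt hab) (List.mem_range.mp hb)
  -- enumeration of rows
  set e : ℕ → ℤ := fun j => l.getD j 0 with he
  have hegetD : ∀ j (hj : j < n), e j = l[j]'(by omega) := by
    intro j hj
    rw [he]
    exact List.getD_eq_getElem l 0 (by omega)
  have he_count : ∀ j, j < n → rowCount P (e j) = h j := by
    intro j hj
    have h1 : (l.map (rowCount P))[j]'(by simp [hlen]; omega) =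
        ((List.range n).map h)[j]'(by simp; omega) := by
      congr 1
    rw [List.getElem_map, List.getElem_map, List.getElem_range] at h1
    rw [hegetD j hj]; exact h1
  have he_mem : ∀ j, j < n → e j ∈ O := by
    intro j hj
    rw [hegetD j hj, ← hmeml]
    exact List.getElem_mem _
  have he_inj : ∀ i j, i < n → j < n → e i = e j → i = j := by
    intro i j hi hj hij
    rw [hegetD i hi, hegetD j hj] at hij
    exact (List.Nodup.getElem_inj_iff hnodup).mp hij
  have he_surj : ∀ i ∈ O, ∃ j, j < n ∧ e j = i := by
    intro i hi
    obtain ⟨j, hj, hji⟩ := List.mem_iff_getElem.mp ((hmeml i).mpr hi)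
    exact ⟨j, by omega, by rw [hegetD j (by omega)]; exact hji⟩
  -- nesting along the enumeration
  have hRS : ∀ j t, j ≤ t → t < n → rowSet P (e t) ⊆ rowSet P (e j) := by
    intro j t hjt ht
    have hcard : (rowSet P (e t)).card ≤ (rowSet P (e j)).card := by
      rw [card_rowSet, card_rowSet, he_count t ht, he_count j (by omega)]
      exact hdec j t hjt ht
    rcases rowSet_nested hcross (e t) (e j) with hsub | hsub
    · exact hsub
    · rw [Finset.eq_of_subset_of_card_le hsub hcard]
  -- row membership of cells
  have hfstO : ∀ a ∈ P, (a : ℤ × ℤ).1 ∈ O := by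
    intro a ha; rw [hO]; exact Finset.mem_image_of_mem _ ha
  have hcellrow : ∀ a ∈ P, (a : ℤ × ℤ).2 ∈ rowSet P a.1 := by
    intro a ha; exact mem_rowSet.mpr (by rwa [show ((a : ℤ × ℤ).1, a.2) = a from rfl])
  set N := min n ((Finset.range n).inf' (Finset.nonempty_range_iff.mpr hn.ne')
        (fun j => h j + j)) with hN
  have hNn : N ≤ n := min_le_left _ _
  have hNj : ∀ j, j < n → N ≤ h j + j := by
    intro j hj
    exact le_trans (min_le_right _ _)
      (Finset.inf'_le _ (Finset.mem_range.mpr hj))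
  constructor
  · -- N rooks can be placed
    have build : ∀ d, d ≤ N → ∃ R, R ∈ rookPlacements P d ∧
        (∀ a ∈ R, ∃ t, N - d ≤ t ∧ t < N ∧ (a : ℤ × ℤ).1 = e t) ∧
        (∀ a ∈ R, (a : ℤ × ℤ).2 ∈ rowSet P (e (N - d))) := by
      intro d
      induction d with
      | zero =>
        intro _
        refine ⟨∅, mem_rook.mpr ⟨Finset.empty_subset _, Finset.card_empty, ?_⟩, ?_, ?_⟩ <;>
          simp
      | succ d ih =>
        intro hdN
        obtain ⟨R, hRmem, hRrows, hRcols⟩ := ih (by omega)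
        obtain ⟨hRP, hRcard, hRrook⟩ := mem_rook.mp hRmem
        set j := N - (d + 1) with hj
        have hjn : j < n := by omega
        have hcolsub : ∀ a ∈ R, (a : ℤ × ℤ).2 ∈ rowSet P (e j) := by
          intro a ha
          rcases Nat.eq_zero_or_pos d with hd0 | hd0
          · exfalso
            rw [hd0] at hRcard
            rw [Finset.card_eq_zero.mp hRcard] at ha
            exact absurd ha (Finset.notMem_empty a)
          · exact hRS j (N - d) (by omega) (by omega) (hRcols a ha)
        set cols := R.image Prod.snd with hcols'
        have hcolscard : cols.card = d := by
          rw [hcols', Finset.card_image_of_injOn, hRcard]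
          intro x hx y hy hxy
          by_contra hne
          exact absurd hxy (hRrook x hx y hy hne).2
        have hcolssub : cols ⊆ rowSet P (e j) := by
          rw [hcols']
          intro x hx
          obtain ⟨a, ha, rfl⟩ := Finset.mem_image.mp hx
          exact hcolsub a ha
        have hbig : cols.card < (rowSet P (e j)).card := by
          rw [hcolscard, card_rowSet, he_count j hjn]
          have := hNj j hjn
          omega
        obtain ⟨cnew, hcnew, hcnew'⟩ : ∃ x ∈ rowSet P (e j), x ∉ cols := by
          by_contra hc
          push_neg at hc
          exact absurd (Finset.card_le_card hc) (by omega)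
        have hcnewsub := hcolssub
        have ha0P : (e j, cnew) ∈ P := mem_rowSet.mp hcnew
        have ha0R : (e j, cnew) ∉ R := by
          intro hmem
          exact hcnew' (Finset.mem_image_of_mem Prod.snd hmem)
        refine ⟨insert (e j, cnew) R, mem_rook.mpr ⟨?_, ?_, ?_⟩, ?_, ?_⟩
        · intro x hx
          rcases Finset.mem_insert.mp hx with rfl | hx
          · exact ha0P
          · exact hRP hx
        · rw [Finset.card_insert_of_notMem ha0R, hRcard]
        · intro a ha b hb hne
          rcases Finset.mem_insert.mp ha with rfl | ha <;>
            rcases Finset.mem_insert.mp hb with rfl | hb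
          · exact absurd rfl hne
          · obtain ⟨t, ht1, ht2, ht3⟩ := hRrows b hb
            constructor
            · rw [ht3]
              intro hejt
              have := he_inj j t hjn (by omega) hejt
              omega
            · intro hsnd
              apply hcnew'
              rw [hcols', show cnew = b.2 from hsnd]
              exact Finset.mem_image_of_mem Prod.snd hb
          · obtain ⟨t, ht1, ht2, ht3⟩ := hRrows a ha
            constructor
            · rw [ht3]
              intro hejt
              have := he_inj t j (by omega) hjn hejt
              omega
            · intro hsnd
              apply hcnew'
              rw [hcols', show cnew = a.2 from hsnd.symm]
              exact Finset.mem_image_of_mem Prod.snd ha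
          · exact hRrook a ha b hb hne
        · intro a ha
          rcases Finset.mem_insert.mp ha with rfl | ha
          · exact ⟨j, le_refl _, by omega, rfl⟩
          · obtain ⟨t, ht1, ht2, ht3⟩ := hRrows a ha
            exact ⟨t, by omega, ht2, ht3⟩
        · intro a ha
          rcases Finset.mem_insert.mp ha with rfl | ha
          · exact hcnew
          · exact hcolsub a ha
    obtain ⟨R, hR, -, -⟩ := build N le_rfl
    exact ⟨R, hR⟩
  · -- upper bound
    rintro k ⟨R, hR⟩
    obtain ⟨hRP, hRcard, hRrook⟩ := mem_rook.mp hR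
    have hinjfst : Set.InjOn Prod.fst (R : Set (ℤ × ℤ)) := by
      intro x hx y hy hxy
      by_contra hne
      exact absurd hxy (hRrook x hx y hy hne).1
    have hinjsnd : Set.InjOn Prod.snd (R : Set (ℤ × ℤ)) := by
      intro x hx y hy hxy
      by_contra hne
      exact absurd hxy (hRrook x hx y hy hne).2
    have hkn : k ≤ n := by
      rw [← hRcard, ← Finset.card_image_of_injOn hinjfst, ← hcardO]
      apply Finset.card_le_card
      intro x hx
      obtain ⟨a, ha, rfl⟩ := Finset.mem_image.mp hx
      exact hfstO a (hRP ha)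
    have hkj : ∀ j, j < n → k ≤ h j + j := by
      intro j hj
      set R1 := R.filter (fun a => a.1 ∈ (Finset.range j).image e) with hR1
      set R2 := R.filter (fun a => ¬ a.1 ∈ (Finset.range j).image e) with hR2
      have hsplit : R1.card + R2.card = R.card :=
        Finset.card_filter_add_card_filter_not _
      have hc1 : R1.card ≤ j := by
        have : R1.card = (R1.image Prod.fst).card := by
          rw [Finset.card_image_of_injOn (Set.InjOn.mono ?_ hinjfst)]
          intro x hx
          exact Finset.mem_coe.mpr (Finset.filter_subset _ _ (Finset.mem_coe.mp hx))
        rw [this]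
        calc (R1.image Prod.fst).card ≤ ((Finset.range j).image e).card := by
              apply Finset.card_le_card
              intro x hx
              obtain ⟨a, ha, rfl⟩ := Finset.mem_image.mp hx
              exact (Finset.mem_filter.mp ha).2
          _ ≤ j := le_trans (Finset.card_image_le) (by rw [Finset.card_range])
      have hc2 : R2.card ≤ h j := by
        have heq : R2.card = (R2.image Prod.snd).card := by
          rw [Finset.card_image_of_injOn (Set.InjOn.mono ?_ hinjsnd)]
          intro x hx
          exact Finset.mem_coe.mpr (Finset.filter_subset _ _ (Finset.mem_coe.mp hx))
        rw [heq, ← he_count j hj, ← card_rowSet]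
        apply Finset.card_le_card
        intro x hx
        obtain ⟨a, ha, rfl⟩ := Finset.mem_image.mp hx
        obtain ⟨haR, hanot⟩ := Finset.mem_filter.mp ha
        have haP := hRP haR
        obtain ⟨t, htn, hte⟩ := he_surj a.1 (hfstO a haP)
        have hjt : j ≤ t := by
          by_contra hlt
          apply hanot
          exact Finset.mem_image.mpr ⟨t, Finset.mem_range.mpr (by omega), hte⟩
        apply hRS j t hjt htn
        rw [hte]
        exact hcellrow a haP
      omega
    apply le_min hkn
    apply Finset.le_inf'
    intro b hb
    have := hkj b (Finset.mem_range.mp hb)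
    omega

lemma mem_rook' {α β : Type*} [DecidableEq α] [DecidableEq β]
    {P : Finset (α × β)} {r : ℕ} {R : Finset (α × β)} :
    R ∈ rookPlacements P r ↔ R ⊆ P ∧ R.card = r ∧
      ∀ a ∈ R, ∀ b ∈ R, a ≠ b → a.1 ≠ b.1 ∧ a.2 ≠ b.2 := by
  simp [rookPlacements, Finset.mem_filter, Finset.mem_powerset, and_assoc]

lemma swap_image_swap (P : Finset (ℤ × ℤ)) : (P.image Prod.swap).image Prod.swap = P := by
  rw [Finset.image_image]
  have : (Prod.swap ∘ Prod.swap : ℤ × ℤ → ℤ × ℤ) = id := by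
    funext x; simp
  rw [this, Finset.image_id]

lemma filter_swap (P : Finset (ℤ × ℤ)) (i : ℤ) :
    (P.image Prod.swap).filter (fun c => c.1 = i) =
      (P.filter (fun c => c.2 = i)).image Prod.swap := by
  ext x
  simp only [Finset.mem_filter, Finset.mem_image]
  constructor
  · rintro ⟨⟨y, hy, rfl⟩, hx⟩
    exact ⟨y, ⟨hy, hx⟩, rfl⟩
  · rintro ⟨y, ⟨hy, hy2⟩, rfl⟩
    exact ⟨⟨y, hy, rfl⟩, hy2⟩

lemma rowCount_swap (P : Finset (ℤ × ℤ)) (i : ℤ) :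
    rowCount (P.image Prod.swap) i = colCount P i := by
  rw [rowCount, colCount, filter_swap]
  exact Finset.card_image_of_injective _ Prod.swap_injective

lemma rowMultiset_swap (P : Finset (ℤ × ℤ)) :
    rowMultiset (P.image Prod.swap) = colMultiset P := by
  rw [rowMultiset, colMultiset]
  have h1 : (P.image Prod.swap).image Prod.fst = P.image Prod.snd := by
    rw [Finset.image_image]; rfl
  rw [h1]
  apply Multiset.map_congr rfl
  intro x _
  exact rowCount_swap P x

lemma rook_swap {P : Finset (ℤ × ℤ)} {r : ℕ} {R : Finset (ℤ × ℤ)}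
    (hR : R ∈ rookPlacements P r) :
    R.image Prod.swap ∈ rookPlacements (P.image Prod.swap) r := by
  obtain ⟨hRP, hRc, hRr⟩ := mem_rook'.mp hR
  refine mem_rook'.mpr ⟨Finset.image_subset_image hRP,
    by rw [Finset.card_image_of_injective _ Prod.swap_injective, hRc], ?_⟩
  rintro a ha b hb hne
  obtain ⟨a', ha', rfl⟩ := Finset.mem_image.mp ha
  obtain ⟨b', hb', rfl⟩ := Finset.mem_image.mp hb
  have hne' : a' ≠ b' := fun hc => hne (by rw [hc])
  obtain ⟨h1, h2⟩ := hRr a' ha' b' hb' hne'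
  exact ⟨h2, h1⟩

lemma placements_swap (P : Finset (ℤ × ℤ)) (r : ℕ) :
    (rookPlacements (P.image Prod.swap) r).Nonempty ↔ (rookPlacements P r).Nonempty := by
  constructor
  · rintro ⟨R, hR⟩
    exact ⟨R.image Prod.swap, by simpa [swap_image_swap] using rook_swap hR⟩
  · rintro ⟨R, hR⟩
    exact ⟨R.image Prod.swap, rook_swap hR⟩

lemma cross_swap {P : Finset (ℤ × ℤ)}
    (hcross : ∀ a ∈ P, ∀ b ∈ P, ((a.1, b.2) ∈ P ∨ (b.1, a.2) ∈ P)) :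
    ∀ a ∈ P.image Prod.swap, ∀ b ∈ P.image Prod.swap,
      ((a.1, b.2) ∈ P.image Prod.swap ∨ (b.1, a.2) ∈ P.image Prod.swap) := by
  rintro a ha b hb
  obtain ⟨a', ha', rfl⟩ := Finset.mem_image.mp ha
  obtain ⟨b', hb', rfl⟩ := Finset.mem_image.mp hb
  rcases hcross b' hb' a' ha' with hx | hx
  · left
    exact Finset.mem_image.mpr ⟨(b'.1, a'.2), hx, rfl⟩
  · right
    exact Finset.mem_image.mpr ⟨(a'.1, b'.2), hx, rfl⟩

theorem stmt11 (P : Finset (ℤ × ℤ)) (hne : P.Nonempty) (hP : IsLConvex P)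
    (n m : ℕ) (hn : 0 < n) (hm : 0 < m) (h v : ℕ → ℕ)
    (hdec : ∀ i j : ℕ, i ≤ j → j < n → h j ≤ h i) (hpos : ∀ i, i < n → 0 < h i)
    (vdec : ∀ i j : ℕ, i ≤ j → j < m → v j ≤ v i) (vpos : ∀ i, i < m → 0 < v i)
    (hrows : rowMultiset P = (Finset.range n).val.map h)
    (hcols : colMultiset P = (Finset.range m).val.map v) :
    min n ((Finset.range n).inf' (Finset.nonempty_range_iff.mpr hn.ne')
        (fun j => h j + j)) =
      min m ((Finset.range m).inf' (Finset.nonempty_range_iff.mpr hm.ne')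
        (fun j => v j + j)) ∧
    IsGreatest {k | (rookPlacements P k).Nonempty}
      (min n ((Finset.range n).inf' (Finset.nonempty_range_iff.mpr hn.ne')
        (fun j => h j + j))) := by
  have hcross := crossing hP
  have G1 := master P hcross n hn h hdec hrows
  have hcross' := cross_swap hcross
  have hrows' : rowMultiset (P.image Prod.swap) = (Finset.range m).val.map v := by
    rw [rowMultiset_swap]; exact hcols
  have G2 := master (P.image Prod.swap) hcross' m hm v vdec hrows'
  have hsets : {k | (rookPlacements (P.image Prod.swap) k).Nonempty} =
      {k | (rookPlacements P k).Nonempty} := by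
    ext k; exact placements_swap P k
  rw [hsets] at G2
  exact ⟨G1.unique G2, G1⟩
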